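/- The unique sequence (a_n)_{n≥1} with a_1 = 1 satisfying, for all n ≥ 1, a_{n+1} = (1/(n+1)) Σ_{partitions 1^{r_1}···n^{r_n} of n} multinomial(n+1; n+1-Σr_i, r_1,...,r_n) a_1^{r_1} ··· a_n^{r_n}, coincides with the left-shift eigensequence for self-composition, i.e., its generating function A(x) satisfies A(A(x)) = (A(x)-x)/x. -/

import Mathlib

open PowerSeries Finset

/-- Composition `f ∘ g` (i.e. `f(g(x))`) of formal power series, valid when `g`
has zero constant term. -/
noncomputable def psComp {R : Type*} [CommSemiring R] (f g : PowerSeries R) : PowerSeries R :=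
  PowerSeries.mk fun n =>
    ∑ k ∈ Finset.range (n + 1), PowerSeries.coeff k f * PowerSeries.coeff n (g ^ k)


/-- The Lagrange-inversion partition sum
`∑ multinomial(n+1; n+1-∑rᵢ, r₁,…,rₙ) a₁^{r₁} ⋯ aₙ^{rₙ}` over all
`r₁,…,rₙ ≥ 0` with `∑ i·rᵢ = n` (each `rᵢ ≤ n` automatically). -/
noncomputable def pSum (n : ℕ) (a : ℕ → ℚ) : ℚ :=
  ∑ r ∈ Finset.univ.filter
      (fun r : Fin n → Fin (n + 1) => ∑ i, (i.1 + 1) * (r i).1 = n),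
    ((Nat.factorial (n + 1) : ℚ) /
        ((Nat.factorial (n + 1 - ∑ i, (r i).1) : ℚ) * ∏ i, (Nat.factorial (r i).1 : ℚ))) *
      ∏ i, a (i.1 + 1) ^ (r i).1

def bb (a : ℕ → ℚ) : ℕ → ℚ := fun i => if i = 0 then 1 else a i

/-- forward map from `r` to `k` -/
def fwd (m : ℕ) (r : Fin m → Fin (m + 1)) : ℕ → ℕ := fun t =>
  if ht : t - 1 < m ∧ t ≠ 0 then ((r ⟨t - 1, ht.1⟩ : ℕ))
  else if t = 0 then (m + 1) - ∑ i : Fin m, ((r i : ℕ)) else 0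

lemma fwd_succ (m : ℕ) (r : Fin m → Fin (m + 1)) (i : Fin m) :
    fwd m r (i.1 + 1) = ((r i : ℕ)) := by
  have h : (i.1 + 1) - 1 < m ∧ (i.1 + 1) ≠ 0 := ⟨by simpa using i.isLt, by omega⟩
  rw [fwd, dif_pos h]
  exact congrArg (fun x => ((r x : ℕ))) (Fin.ext (Nat.succ_sub_one _))

lemma fwd_zero (m : ℕ) (r : Fin m → Fin (m + 1)) :
    fwd m r 0 = (m + 1) - ∑ i : Fin m, ((r i : ℕ)) := by
  simp [fwd]

lemma fwd_large (m : ℕ) (r : Fin m → Fin (m + 1)) (t : ℕ) (h : m + 1 ≤ t) :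
    fwd m r t = 0 := by
  rw [fwd, dif_neg (by omega), if_neg (by omega)]

lemma sum_le_weighted (m : ℕ) (r : Fin m → Fin (m + 1))
    (h : ∑ i, (i.1 + 1) * (r i).1 = m) : ∑ i : Fin m, ((r i : ℕ)) ≤ m := by
  calc ∑ i : Fin m, ((r i : ℕ)) ≤ ∑ i : Fin m, (i.1 + 1) * (r i).1 :=
        Finset.sum_le_sum fun i _ => Nat.le_mul_of_pos_left _ (by omega)
    _ = m := h

lemma pSum_eq_piAntidiag (a : ℕ → ℚ) (m : ℕ) :
    pSum m a = ∑ k ∈ (Finset.piAntidiag (range (m + 1)) (m + 1)).filter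
            (fun k => ∑ i ∈ range (m + 1), i * k i = m),
          (Nat.multinomial (range (m + 1)) k : ℚ) * ∏ i ∈ range (m + 1), bb a i ^ k i := by
  rw [pSum]
  refine Finset.sum_nbij' (fwd m)
    (fun k => fun i : Fin m => (⟨min (k (i.1 + 1)) m, by omega⟩ : Fin (m + 1)))
    ?_ ?_ ?_ ?_ ?_
  · -- fwd r ∈ filtered piAntidiag
    intro r hr
    rw [Finset.mem_filter] at hr ⊢
    have hsum := hr.2
    have hle := sum_le_weighted m r hsum
    constructor
    · rw [Finset.mem_piAntidiag]
      constructor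
      · rw [Finset.sum_range_succ']
        have h1 : ∑ i ∈ range m, fwd m r (i + 1) = ∑ i : Fin m, ((r i : ℕ)) := by
          rw [Finset.sum_range fun i => fwd m r (i + 1)]
          exact Finset.sum_congr rfl fun i _ => fwd_succ m r i
        rw [h1, fwd_zero]
        omega
      · intro t ht
        by_contra hmem
        rw [Finset.mem_range] at hmem
        exact ht (fwd_large m r t (by omega))
    · rw [Finset.sum_range_succ']
      have h1 : ∑ i ∈ range m, (i + 1) * fwd m r (i + 1)
          = ∑ i : Fin m, (i.1 + 1) * (r i).1 := by
        rw [Finset.sum_range fun i => (i + 1) * fwd m r (i + 1)]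
        exact Finset.sum_congr rfl fun i _ => by rw [fwd_succ]
      rw [h1, hsum]
      simp
  · -- bwd k ∈ filter
    intro k hk
    rw [Finset.mem_filter] at hk
    rw [Finset.mem_filter]
    refine ⟨Finset.mem_univ _, ?_⟩
    obtain ⟨hpi, hwt⟩ := hk
    rw [Finset.mem_piAntidiag] at hpi
    have hbd : ∀ i : Fin m, k (i.1 + 1) ≤ m := by
      intro i
      have hmem : i.1 + 1 ∈ range (m + 1) := Finset.mem_range.2 (by omega)
      have := Finset.single_le_sum (f := fun t => t * k t)
        (fun t _ => Nat.zero_le _) hmem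
      rw [hwt] at this
      calc k (i.1 + 1) ≤ (i.1 + 1) * k (i.1 + 1) := Nat.le_mul_of_pos_left _ (by omega)
        _ ≤ m := this
    have : ∀ i : Fin m, (i.1 + 1) * min (k (i.1 + 1)) m = (i.1 + 1) * k (i.1 + 1) := by
      intro i; rw [min_eq_left (hbd i)]
    calc ∑ i : Fin m, (i.1 + 1) * min (k (i.1 + 1)) m
        = ∑ i : Fin m, (i.1 + 1) * k (i.1 + 1) := Finset.sum_congr rfl fun i _ => this i
      _ = ∑ i ∈ range m, (i + 1) * k (i + 1) := by
          rw [Finset.sum_range fun i => (i + 1) * k (i + 1)]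
      _ = m := by
          have hpeel : ∑ t ∈ range (m + 1), t * k t = ∑ i ∈ range m, (i + 1) * k (i + 1) := by
            rw [Finset.sum_range_succ']; simp
          rw [← hpeel, hwt]
  · -- left inverse
    intro r hr
    funext i
    apply Fin.ext
    show min (fwd m r (i.1 + 1)) m = (r i : ℕ)
    rw [fwd_succ]
    exact min_eq_left (by omega)
  · -- right inverse
    intro k hk
    rw [Finset.mem_filter] at hk
    obtain ⟨hpi, hwt⟩ := hk
    rw [Finset.mem_piAntidiag] at hpi
    have hbd : ∀ t, 1 ≤ t → t ≤ m → k t ≤ m := by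
      intro t h1 h2
      have hmem : t ∈ range (m + 1) := by simp; omega
      have := Finset.single_le_sum (f := fun t => t * k t)
        (fun t _ => Nat.zero_le _) hmem
      rw [hwt] at this
      calc k t ≤ t * k t := Nat.le_mul_of_pos_left _ (by omega)
        _ ≤ m := this
    funext t
    rcases Nat.lt_or_ge t (m + 1) with hlt | hge
    · rcases Nat.eq_zero_or_pos t with h0 | h0
      · subst h0
        rw [fwd_zero]
        have h1 : ∑ i : Fin m, min (k (i.1 + 1)) m = ∑ i ∈ range m, k (i + 1) := by
          rw [Finset.sum_range fun i => k (i + 1)]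
          exact Finset.sum_congr rfl fun i _ =>
            min_eq_left (hbd _ (by omega) (by omega))
        show (m + 1) - ∑ i : Fin m,
          ((⟨min (k (i.1 + 1)) m, by omega⟩ : Fin (m+1)) : ℕ) = k 0
        simp only []
        rw [h1]
        have h2 : ∑ t ∈ range (m + 1), k t = m + 1 := hpi.1
        rw [Finset.sum_range_succ'] at h2
        omega
      · have : t - 1 < m ∧ t ≠ 0 := ⟨by omega, by omega⟩
        rw [fwd, dif_pos this]
        show min (k ((t - 1) + 1)) m = k t
        have ht1 : (t - 1) + 1 = t := by omega
        rw [ht1]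
        exact min_eq_left (hbd t (by omega) (by omega))
    · rw [fwd_large m _ t hge]
      by_contra h
      have := hpi.2 t (fun hz => h hz.symm)
      rw [Finset.mem_range] at this
      omega
  · -- summand equality
    intro r hr
    rw [Finset.mem_filter] at hr
    have hsum := hr.2
    have hle := sum_le_weighted m r hsum
    set σ := ∑ i : Fin m, ((r i : ℕ)) with hσ
    have hK : ∑ t ∈ range (m + 1), fwd m r t = m + 1 := by
      rw [Finset.sum_range_succ']
      have h1 : ∑ i ∈ range m, fwd m r (i + 1) = σ := by
        rw [Finset.sum_range fun i => fwd m r (i + 1)]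
        exact Finset.sum_congr rfl fun i _ => fwd_succ m r i
      rw [h1, fwd_zero]
      omega
    have hspec := Nat.multinomial_spec (range (m + 1)) (fwd m r)
    rw [hK] at hspec
    have hprodfac : ∏ t ∈ range (m + 1), (fwd m r t).factorial
        = (∏ i : Fin m, ((r i : ℕ)).factorial) * ((m + 1) - σ).factorial := by
      rw [Finset.prod_range_succ']
      congr 1
      · rw [Finset.prod_range fun i => (fwd m r (i + 1)).factorial]
        exact Finset.prod_congr rfl fun i _ => by rw [fwd_succ]
      · rw [fwd_zero]
    have hprodbb : ∏ i ∈ range (m + 1), bb a i ^ fwd m r i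
        = ∏ i : Fin m, a (i.1 + 1) ^ ((r i : ℕ)) := by
      rw [Finset.prod_range_succ']
      have h0 : bb a 0 ^ fwd m r 0 = 1 := by rw [bb]; simp
      rw [h0, mul_one]
      rw [Finset.prod_range fun i => bb a (i + 1) ^ fwd m r (i + 1)]
      refine Finset.prod_congr rfl fun i _ => ?_
      rw [fwd_succ, bb]
      simp
    have hfacne : (((∏ i : Fin m, ((r i : ℕ)).factorial) * ((m + 1) - σ).factorial : ℕ) : ℚ) ≠ 0 := by
      have := Nat.factorial_pos ((m + 1) - σ)
      have h2 : 0 < ∏ i : Fin m, ((r i : ℕ)).factorial :=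
        Finset.prod_pos fun i _ => Nat.factorial_pos _
      positivity
    have hmult : (Nat.multinomial (range (m + 1)) (fwd m r) : ℚ)
        = (Nat.factorial (m + 1) : ℚ)
          / ((Nat.factorial ((m + 1) - σ) : ℚ) * ∏ i : Fin m, (((r i : ℕ)).factorial : ℚ)) := by
      have hc : ((∏ t ∈ range (m + 1), (fwd m r t).factorial : ℕ) : ℚ)
          * (Nat.multinomial (range (m + 1)) (fwd m r) : ℚ)
          = (Nat.factorial (m + 1) : ℚ) := by exact_mod_cast congrArg (Nat.cast : ℕ → ℚ) hspec
      rw [hprodfac] at hc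
      rw [eq_div_iff]
      · push_cast at hc ⊢
        linarith [hc]
      · push_cast at hfacne ⊢
        intro h
        apply hfacne
        rw [mul_comm] at h
        exact h
    rw [hmult, hprodbb]

lemma coeff_psComp (f g : ℚ⟦X⟧) (n : ℕ) :
    PowerSeries.coeff n (psComp f g)
      = ∑ k ∈ range (n + 1), coeff k f * coeff n (g ^ k) := by
  simp [psComp]

lemma coeff_pow_zero_of_lt {g : ℚ⟦X⟧} (hg : constantCoeff g = 0) {j k : ℕ} (h : j < k) :
    coeff j (g ^ k) = 0 := by
  have : (X : ℚ⟦X⟧) ^ k ∣ g ^ k := pow_dvd_pow_of_dvd (X_dvd_iff.2 hg) k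
  exact (X_pow_dvd_iff.1 this) j h

lemma coeff_of_dvd_pow {f : ℚ⟦X⟧} {k j : ℕ} (h : (X : ℚ⟦X⟧) ^ k ∣ f) (hj : j < k) :
    coeff j f = 0 := (X_pow_dvd_iff.1 h) j hj

lemma coeff_psComp_eq_aeval_trunc (f g : ℚ⟦X⟧) (hg : constantCoeff g = 0)
    {j N : ℕ} (hj : j < N) :
    coeff j (psComp f g) = coeff j (Polynomial.aeval g (trunc N f)) := by
  have hd : (trunc N f).natDegree < N := by
    rcases eq_or_ne (trunc N f) 0 with h0 | h0
    · simp [h0]; omega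
    · exact Polynomial.natDegree_lt_iff_degree_lt h0 |>.2
        (by exact_mod_cast degree_trunc_lt f N)
  rw [Polynomial.aeval_eq_sum_range' hd, coeff_psComp, map_sum]
  have h1 : ∀ i ∈ range N, coeff j ((trunc N f).coeff i • g ^ i)
      = coeff i f * coeff j (g ^ i) := by
    intro i hi
    rw [map_smul, smul_eq_mul, coeff_trunc, if_pos (mem_range.1 hi)]
  rw [Finset.sum_congr rfl h1]
  refine Finset.sum_subset (by intro x hx; simp at *; omega) ?_
  intro i hi hni
  have : j < i := by simp at hi hni; omega
  rw [coeff_pow_zero_of_lt hg this, mul_zero]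

lemma res_lemma (U : ℚ⟦X⟧) (hU0 : constantCoeff U = 1) (j : ℕ) :
    coeff j ((U⁻¹) ^ (j + 1) * d⁄dX ℚ (X * U)) = if j = 0 then 1 else 0 := by
  have hne : constantCoeff U ≠ 0 := by rw [hU0]; norm_num
  have hUV : U * U⁻¹ = 1 := PowerSeries.mul_inv_cancel U hne
  have hVU : U⁻¹ * U = 1 := PowerSeries.inv_mul_cancel U hne
  have hder : d⁄dX ℚ (X * U) = U + X * d⁄dX ℚ U := by
    rw [Derivation.leibniz]
    simp only [smul_eq_mul, derivative_X, mul_one]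
    ring
  rw [hder]
  have key : (U⁻¹) ^ (j + 1) * U = (U⁻¹) ^ j := by
    rw [pow_succ, mul_assoc, hVU, mul_one]
  have hsplit : (U⁻¹) ^ (j + 1) * (U + X * d⁄dX ℚ U)
      = (U⁻¹) ^ j + X * ((U⁻¹) ^ (j + 1) * d⁄dX ℚ U) := by
    rw [mul_add, key]; ring
  rw [hsplit]
  cases j with
  | zero =>
    simp [constantCoeff_X]
  | succ m =>
    rw [map_add, coeff_succ_X_mul, if_neg (Nat.succ_ne_zero m)]
    have hdpow : d⁄dX ℚ ((U⁻¹) ^ (m + 1))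
        = -((m + 1 : ℚ⟦X⟧)) * ((U⁻¹) ^ (m + 1 + 1) * d⁄dX ℚ U) := by
      rw [Derivation.leibniz_pow]
      rw [derivative_inv']
      simp only [Nat.add_sub_cancel, smul_eq_mul, nsmul_eq_mul]
      push_cast
      ring
    have h1 : coeff m (d⁄dX ℚ ((U⁻¹) ^ (m + 1)))
        = coeff (m + 1) ((U⁻¹) ^ (m + 1)) * (m + 1) := coeff_derivative _ m
    rw [hdpow] at h1
    have h2 : coeff m (-((m + 1 : ℚ⟦X⟧)) * ((U⁻¹) ^ (m + 1 + 1) * d⁄dX ℚ U))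
        = -((m+1 : ℚ)) * coeff m ((U⁻¹) ^ (m + 1 + 1) * d⁄dX ℚ U) := by
      have hc : -((m + 1 : ℚ⟦X⟧)) = PowerSeries.C (-(m+1 : ℚ)) := by
        push_cast
        simp
      rw [hc, coeff_C_mul]
    rw [h2] at h1
    have hm1 : -((m:ℚ) + 1) ≠ 0 := by
      have : ((m:ℚ) + 1) > 0 := by positivity
      intro h; linarith
    have h4 : -((m:ℚ)+1) * coeff m ((U⁻¹) ^ (m + 1 + 1) * d⁄dX ℚ U)
        = -((m:ℚ)+1) * (-coeff (m + 1) ((U⁻¹) ^ (m + 1))) := by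
      rw [h1]; ring
    have h5 := mul_left_cancel₀ hm1 h4
    rw [h5]
    ring


lemma coeff_pow_trunc (a : ℕ → ℚ) (m : ℕ) (A : ℚ⟦X⟧)
    (hA : A = PowerSeries.mk fun n => if n = 0 then 0 else a n) :
    coeff m ((1 + A) ^ (m + 1))
      = coeff m ((∑ i ∈ range (m + 1), PowerSeries.C (bb a i) * X ^ i) ^ (m + 1)) := by
  set P : ℚ⟦X⟧ := ∑ i ∈ range (m + 1), PowerSeries.C (bb a i) * X ^ i with hP
  have hdvd : (X : ℚ⟦X⟧) ^ (m + 1) ∣ (1 + A) - P := by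
    rw [X_pow_dvd_iff]
    intro j hj
    have hPj : coeff j P = bb a j := by
      rw [hP, map_sum]
      have : ∀ i ∈ range (m + 1), coeff j (PowerSeries.C (bb a i) * X ^ i)
          = if j = i then bb a i else 0 := fun i _ => coeff_C_mul_X_pow _ _ _
      rw [Finset.sum_congr rfl this, Finset.sum_ite_eq (range (m+1)) j (fun i => bb a i),
        if_pos (mem_range.2 hj)]
    rw [map_sub, hPj, map_add, hA]
    rcases Nat.eq_zero_or_pos j with h0 | h0
    · subst h0; simp [bb]
    · have : j ≠ 0 := by omega
      simp [bb, this, coeff_one, coeff_mk]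
  have hdvd2 : (X : ℚ⟦X⟧) ^ (m + 1) ∣ (1 + A) ^ (m + 1) - P ^ (m + 1) :=
    dvd_trans hdvd (sub_dvd_pow_sub_pow _ _ _)
  have := coeff_of_dvd_pow hdvd2 (Nat.lt_succ_self m)
  rw [map_sub, sub_eq_zero] at this
  exact this


lemma coeff_pow_multinomial (a : ℕ → ℚ) (m : ℕ) :
    coeff m ((∑ i ∈ range (m + 1), PowerSeries.C (bb a i) * X ^ i) ^ (m + 1))
      = ∑ k ∈ (Finset.piAntidiag (range (m + 1)) (m + 1)).filter
            (fun k => ∑ i ∈ range (m + 1), i * k i = m),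
          (Nat.multinomial (range (m + 1)) k : ℚ) * ∏ i ∈ range (m + 1), bb a i ^ k i := by
  rw [Finset.sum_pow_eq_sum_piAntidiag, map_sum]
  rw [Finset.sum_filter]
  apply Finset.sum_congr rfl
  intro k _
  have hterm : ∀ i ∈ range (m+1), (PowerSeries.C (bb a i) * X ^ i) ^ k i
      = PowerSeries.C (bb a i ^ k i) * X ^ (i * k i) := by
    intro i _
    rw [mul_pow, ← map_pow, ← pow_mul]
  rw [Finset.prod_congr rfl hterm, Finset.prod_mul_distrib, ← map_prod,
    Finset.prod_pow_eq_pow_sum]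
  have hcast : ((Nat.multinomial (range (m + 1)) k : ℕ) : ℚ⟦X⟧)
      = PowerSeries.C ((Nat.multinomial (range (m + 1)) k : ℕ) : ℚ) := by
    rw [map_natCast]
  rw [hcast, ← mul_assoc, ← map_mul, coeff_C_mul_X_pow]
  by_cases h : ∑ i ∈ range (m+1), i * k i = m
  · rw [if_pos h, if_pos (by omega : m = ∑ i ∈ range (m+1), i * k i)]
  · rw [if_neg h, if_neg (by omega : ¬ m = ∑ i ∈ range (m+1), i * k i)]


lemma psComp_one_add (f g : ℚ⟦X⟧) : psComp (1 + f) g = 1 + psComp f g := by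
  ext n
  rw [map_add, coeff_psComp, coeff_psComp]
  have h1 : ∀ k ∈ range (n + 1), coeff k (1 + f) * coeff n (g ^ k)
      = (if k = 0 then coeff n (g ^ k) else 0) + coeff k f * coeff n (g ^ k) := by
    intro k _
    rw [map_add, coeff_one, add_mul]
    by_cases h : k = 0 <;> simp [h]
  rw [Finset.sum_congr rfl h1, Finset.sum_add_distrib]
  congr 1
  rw [Finset.sum_ite_eq' (range (n + 1)) 0 (fun k => coeff n (g ^ k)),
    if_pos (by simp)]
  simp

lemma pSum_eq_coeff (a : ℕ → ℚ) (m : ℕ) (A : ℚ⟦X⟧)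
    (hA : A = PowerSeries.mk fun n => if n = 0 then 0 else a n) :
    pSum m a = coeff m ((1 + A) ^ (m + 1)) := by
  rw [coeff_pow_trunc a m A hA, coeff_pow_multinomial a m, pSum_eq_piAntidiag a m]

/-- The unique sequence with `a₁ = 1` satisfying the Lagrange-inversion
recurrence is the left-shift eigensequence for self-composition: its
generating function satisfies `A(A(x)) = (A(x)-x)/x`. -/
theorem fixedPoint_eq_eigensequence (a : ℕ → ℚ) (h1 : a 1 = 1)
    (hrec : ∀ n : ℕ, 1 ≤ n → a (n + 1) = (1 / (n + 1 : ℚ)) * pSum n a)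
    (A : PowerSeries ℚ) (hA : A = PowerSeries.mk fun n => if n = 0 then 0 else a n) :
    PowerSeries.X * psComp A A = A - PowerSeries.X := by
  have hA0 : constantCoeff A = 0 := by rw [hA]; simp [← coeff_zero_eq_constantCoeff]
  set U : ℚ⟦X⟧ := PowerSeries.mk fun k => a (k + 1) with hU
  have hXU : A = X * U := by
    ext n
    cases n with
    | zero =>
      rw [hA, coeff_mk, if_pos rfl, coeff_zero_eq_constantCoeff_apply, map_mul,
        constantCoeff_X, zero_mul]
    | succ n => rw [coeff_succ_X_mul, hA, coeff_mk, coeff_mk, if_neg (Nat.succ_ne_zero n)]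
  have hU0 : constantCoeff U = 1 := by
    rw [hU, ← coeff_zero_eq_constantCoeff, coeff_mk, h1]
  have hUne : constantCoeff U ≠ 0 := by rw [hU0]; norm_num
  have hUV : U * U⁻¹ = 1 := PowerSeries.mul_inv_cancel U hUne
  have hcoeffA : ∀ n : ℕ, coeff (n + 1) A = a (n + 1) := by
    intro n; rw [hA, coeff_mk, if_neg (Nat.succ_ne_zero n)]
  have hcoeffU : ∀ n : ℕ, coeff n U = a (n + 1) := fun n => by rw [hU, coeff_mk]
  set B : ℚ⟦X⟧ := psComp A A with hB
  have hB0 : coeff 0 B = 0 := by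
    rw [hB, coeff_psComp]
    rw [Finset.sum_range_one]
    rw [coeff_zero_eq_constantCoeff_apply, hA0, zero_mul]
  set C : ℚ⟦X⟧ := 1 + B with hC
  have hCcomp : C = psComp (1 + A) A := by rw [psComp_one_add]
  -- the key coefficient identity, by strong induction
  have key : ∀ n : ℕ, 1 ≤ n → coeff n B = a (n + 1) := by
    intro n
    induction n using Nat.strong_induction_on with
    | _ m ih =>
      intro hm
      -- induction hypothesis: C and U agree below m
      have hD : (X : ℚ⟦X⟧) ^ m ∣ C - U := by
        rw [X_pow_dvd_iff]
        intro j hj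
        rw [map_sub, hC, map_add]
        rcases Nat.eq_zero_or_pos j with h0 | h0
        · subst h0
          rw [hB0, hcoeffU, h1, coeff_one]
          norm_num
        · have hj1 : 1 ≤ j := h0
          rw [ih j hj hj1, hcoeffU, coeff_one, if_neg (by omega)]
          ring
      set G : ℚ⟦X⟧ := (U⁻¹) ^ (m + 1) * d⁄dX ℚ (X * U) with hG
      have claim1 : coeff m (C ^ (m + 1) * G) = ((m : ℚ) + 1) * coeff m C := by
        obtain ⟨D2, hD2⟩ := hD
        have hCUD : C = X ^ m * D2 + U := by rw [← hD2]; ring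
        have hexp : coeff m (C ^ (m + 1) * G)
            = ∑ k ∈ range (m + 2),
                coeff m ((X ^ m * D2) ^ k * U ^ (m + 1 - k)
                  * ((Nat.choose (m + 1) k : ℕ) : ℚ⟦X⟧) * G) := by
          rw [hCUD, add_pow, Finset.sum_mul, map_sum]
        rw [hexp, Finset.sum_range_succ', Finset.sum_range_succ']
        have hhigh : ∀ k ∈ range m,
            coeff m ((X ^ m * D2) ^ (k + 1 + 1) * U ^ (m + 1 - (k + 1 + 1))
              * ((Nat.choose (m + 1) (k + 1 + 1) : ℕ) : ℚ⟦X⟧) * G) = 0 := by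
          intro k _
          apply coeff_of_dvd_pow (k := m + 1) _ (Nat.lt_succ_self m)
          have h1 : (X : ℚ⟦X⟧) ^ (m + 1) ∣ (X ^ m * D2) ^ (k + 1 + 1) := by
            have : (X : ℚ⟦X⟧) ^ (m + 1) ∣ (X ^ m) ^ (k + 1 + 1) := by
              rw [← pow_mul]
              exact pow_dvd_pow X (by nlinarith)
            calc (X : ℚ⟦X⟧) ^ (m + 1) ∣ (X ^ m) ^ (k + 1 + 1) := this
              _ ∣ (X ^ m * D2) ^ (k + 1 + 1) := by rw [mul_pow]; exact Dvd.intro _ rfl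
          exact (h1.mul_right _).mul_right _ |>.mul_right _
        rw [Finset.sum_eq_zero hhigh, zero_add]
        -- k = 0 term
        have hk0 : coeff m ((X ^ m * D2) ^ 0 * U ^ (m + 1 - 0)
            * ((Nat.choose (m + 1) 0 : ℕ) : ℚ⟦X⟧) * G)
            = coeff m U * ((m : ℚ) + 1) := by
          rw [pow_zero, one_mul, Nat.sub_zero, Nat.choose_zero_right, Nat.cast_one, mul_one]
          have : U ^ (m + 1) * G = d⁄dX ℚ (X * U) := by
            rw [hG, ← mul_assoc, ← mul_pow, hUV, one_pow, one_mul]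
          rw [this, coeff_derivative, coeff_succ_X_mul]
          try push_cast
          try ring
        -- k = 1 term
        have hk1 : coeff m ((X ^ m * D2) ^ (0 + 1) * U ^ (m + 1 - (0 + 1))
            * ((Nat.choose (m + 1) (0 + 1) : ℕ) : ℚ⟦X⟧) * G)
            = ((m : ℚ) + 1) * (coeff m C - coeff m U) := by
          have hc1 : Nat.choose (m + 1) (0 + 1) = m + 1 := Nat.choose_one_right _
          have hUm : U ^ (m + 1 - (0 + 1)) = U ^ m := by norm_num
          rw [hc1, hUm, pow_one, hG]
          have hre : X ^ m * D2 * U ^ m * ((m + 1 : ℕ) : ℚ⟦X⟧)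
              * ((U⁻¹) ^ (m + 1) * d⁄dX ℚ (X * U))
              = X ^ m * (((m + 1 : ℕ) : ℚ⟦X⟧)
                  * (D2 * ((U ^ m * (U⁻¹) ^ (m + 1)) * d⁄dX ℚ (X * U)))) := by
            ring
          have hUU : U ^ m * (U⁻¹) ^ (m + 1) = U⁻¹ := by
            rw [pow_succ, ← mul_assoc, ← mul_pow, hUV, one_pow, one_mul]
          rw [hre, hUU]
          have := coeff_X_pow_mul (((m + 1 : ℕ) : ℚ⟦X⟧)
            * (D2 * (U⁻¹ * d⁄dX ℚ (X * U)))) m 0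
          rw [zero_add] at this
          rw [this, coeff_zero_eq_constantCoeff_apply, map_mul, map_mul, map_mul]
          have hc2 : constantCoeff (U⁻¹) = 1 := by
            rw [PowerSeries.constantCoeff_inv, hU0]; norm_num
          have hc3 : constantCoeff (d⁄dX ℚ (X * U)) = 1 := by
            rw [← coeff_zero_eq_constantCoeff_apply, coeff_derivative, coeff_succ_X_mul,
              hcoeffU 0, h1]
            norm_num
          have hc4 : constantCoeff D2 = coeff m C - coeff m U := by
            have h5 := coeff_X_pow_mul D2 m 0
            rw [zero_add] at h5
            rw [← coeff_zero_eq_constantCoeff_apply, ← h5, ← hD2, map_sub]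
          rw [hc2, hc3, hc4, map_natCast]
          push_cast
          ring
        rw [hk0, hk1]
        ring
      have claim2 : coeff m (C ^ (m + 1) * G) = coeff m ((1 + A) ^ (m + 1)) := by
        set T : Polynomial ℚ := trunc (m + 1) (1 + A) with hT
        have hCT : (X : ℚ⟦X⟧) ^ (m + 1) ∣ C - Polynomial.aeval A T := by
          rw [X_pow_dvd_iff]
          intro j hj
          rw [map_sub, hCcomp, coeff_psComp_eq_aeval_trunc (1 + A) A hA0 hj, sub_self]
        have hpow : (X : ℚ⟦X⟧) ^ (m + 1) ∣ C ^ (m + 1) - (Polynomial.aeval A T) ^ (m + 1) :=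
          dvd_trans hCT (sub_dvd_pow_sub_pow _ _ _)
        have hstepc : coeff m (C ^ (m + 1) * G)
            = coeff m ((Polynomial.aeval A T) ^ (m + 1) * G) := by
          have h0 : coeff m ((C ^ (m + 1) - (Polynomial.aeval A T) ^ (m + 1)) * G) = 0 :=
            coeff_of_dvd_pow (hpow.mul_right G) (Nat.lt_succ_self m)
          rw [sub_mul, map_sub, sub_eq_zero] at h0
          exact h0
        rw [hstepc, ← map_pow]
        set Q : Polynomial ℚ := T ^ (m + 1) with hQ
        rw [Polynomial.aeval_eq_sum_range (R := ℚ) (x := A) (p := Q), Finset.sum_mul, map_sum]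
        have hterm : ∀ k ∈ range (Q.natDegree + 1),
            coeff m (Q.coeff k • A ^ k * G)
              = if k = m then Q.coeff m else 0 := by
          intro k _
          rw [smul_mul_assoc, map_smul, smul_eq_mul]
          rcases Nat.lt_or_ge m k with hk | hk
          · have hzero : coeff m (A ^ k * G) = 0 := by
              apply coeff_of_dvd_pow (k := m + 1) _ (Nat.lt_succ_self m)
              have h1 : (X : ℚ⟦X⟧) ^ (m + 1) ∣ A ^ k := by
                rw [hXU, mul_pow]
                exact ((pow_dvd_pow X (by omega)).mul_right _)
              exact h1.mul_right _
            rw [hzero, if_neg (by omega), mul_zero]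
          · -- k ≤ m
            obtain ⟨t, ht⟩ : ∃ t, m = k + t := ⟨m - k, by omega⟩
            have hsplit : A ^ k * G = X ^ k * ((U⁻¹) ^ (t + 1) * d⁄dX ℚ (X * U)) := by
              rw [hG, hXU, mul_pow]
              have : U ^ k * ((U⁻¹) ^ (m + 1)) = (U⁻¹) ^ (t + 1) := by
                have hm1 : m + 1 = k + (t + 1) := by omega
                rw [hm1, pow_add, ← mul_assoc, ← mul_pow, hUV, one_pow, one_mul]
              calc X ^ k * U ^ k * ((U⁻¹) ^ (m + 1) * d⁄dX ℚ (X * U))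
                  = X ^ k * (U ^ k * ((U⁻¹) ^ (m + 1)) * d⁄dX ℚ (X * U)) := by ring
                _ = X ^ k * ((U⁻¹) ^ (t + 1) * d⁄dX ℚ (X * U)) := by rw [this]
            rw [hsplit]
            have hcx : coeff m (X ^ k * ((U⁻¹) ^ (t + 1) * d⁄dX ℚ (X * U)))
                = coeff t ((U⁻¹) ^ (t + 1) * d⁄dX ℚ (X * U)) := by
              rw [show m = t + k by omega]
              exact coeff_X_pow_mul ((U⁻¹) ^ (t + 1) * d⁄dX ℚ (X * U)) k t
            rw [hcx, res_lemma U hU0 t]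
            by_cases h0 : t = 0
            · have : k = m := by omega
              rw [if_pos h0, if_pos this, this, mul_one]
            · rw [if_neg h0, if_neg (by omega), mul_zero]
        rw [Finset.sum_congr rfl hterm]
        have hdeg : m ∈ range (Q.natDegree + 1) := by
          have hT1 : T.coeff 1 = 1 := by
            rw [hT, coeff_trunc, if_pos (by omega), map_add, coeff_one, if_neg one_ne_zero,
              hcoeffA 0, h1, zero_add]
          have hTd : 1 ≤ T.natDegree := Polynomial.le_natDegree_of_ne_zero (by rw [hT1]; norm_num)
          have : Q.natDegree = (m + 1) * T.natDegree := by rw [hQ, Polynomial.natDegree_pow]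
          rw [Finset.mem_range, this]
          nlinarith
        rw [Finset.sum_ite_eq' (range (Q.natDegree + 1)) m (fun _ => Q.coeff m), if_pos hdeg]
        -- finally Q.coeff m = coeff m ((1+A)^(m+1))
        have hTA : (X : ℚ⟦X⟧) ^ (m + 1) ∣ (T : ℚ⟦X⟧) - (1 + A) := by
          rw [X_pow_dvd_iff]
          intro j hj
          rw [map_sub, Polynomial.coeff_coe, hT, coeff_trunc, if_pos hj, sub_self]
        have hTA2 : (X : ℚ⟦X⟧) ^ (m + 1) ∣ ((T : ℚ⟦X⟧)) ^ (m + 1) - (1 + A) ^ (m + 1) :=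
          dvd_trans hTA (sub_dvd_pow_sub_pow _ _ _)
        have h6 := coeff_of_dvd_pow hTA2 (Nat.lt_succ_self m)
        rw [map_sub, sub_eq_zero] at h6
        rw [← h6, ← Polynomial.coe_pow, Polynomial.coeff_coe, hQ]
      have hps : pSum m a = coeff m ((1 + A) ^ (m + 1)) := pSum_eq_coeff a m A hA
      have hrecm := hrec m hm
      have hmne : ((m : ℚ) + 1) ≠ 0 := by positivity
      have hCm : coeff m C = coeff m B := by
        rw [hC, map_add, coeff_one, if_neg (by omega)]
        ring
      rw [← hCm]
      rw [hrecm, hps, ← claim2, claim1]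
      field_simp
  -- conclude
  ext n
  cases n with
  | zero =>
    rw [coeff_zero_eq_constantCoeff_apply, map_mul, constantCoeff_X, zero_mul,
      coeff_zero_eq_constantCoeff_apply, map_sub, hA0, constantCoeff_X, sub_zero]
  | succ n =>
    rw [coeff_succ_X_mul, map_sub, coeff_X]
    rcases Nat.eq_zero_or_pos n with h0 | h0
    · subst h0
      rw [hB0, hcoeffA, h1, if_pos rfl]
      norm_num
    · rw [key n h0, hcoeffA, if_neg (by omega)]
      ring
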